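/- Let H be a finite-dimensional complex inner product space and let P_E and P_O be orthogonal projections on H with P_E + P_O = 1. Let ψ and φ be unit vectors in H such that ⟪P_E ψ, P_E φ⟫ = 0 and ⟪P_O ψ, P_O φ⟫ = 0. Then there exists an orthogonal projection S on H that commutes with P_E and satisfies S ψ = ψ and S φ = 0; in particular ⟪ψ, S ψ⟫ − ⟪φ, S φ⟫ = 1. -/

import Mathlib

open Matrix
open scoped ComplexOrder Kronecker

/-- The trace norm `‖Y‖₁ = Tr √(Yᴴ Y)` of a complex matrix. -/
noncomputable def traceNorm {m : Type*} [Fintype m] [DecidableEq m]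
    (Y : Matrix m m ℂ) : ℝ :=
  ((Matrix.posSemidef_conjTranspose_mul_self Y).1.eigenvectorUnitary.1 *
    diagonal ((fun x : ℝ => (x : ℂ)) ∘ (√·) ∘ (Matrix.posSemidef_conjTranspose_mul_self Y).1.eigenvalues) *
    (star (Matrix.posSemidef_conjTranspose_mul_self Y).1.eigenvectorUnitary :
      Matrix m m ℂ)).trace.re

/-- The inner product `⟪x, y⟫ = ∑ i, conj (x i) * y i` on `m → ℂ`. -/
noncomputable def cinner {m : Type*} [Fintype m] (x y : m → ℂ) : ℂ := star x ⬝ᵥ y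

/-- An orthogonal projection: a self-adjoint idempotent matrix. -/
def IsOrthoProj {m : Type*} [Fintype m] (P : Matrix m m ℂ) : Prop :=
  P.IsHermitian ∧ P * P = P

/-- An effect: an operator `S` with `0 ≤ S ≤ 1`. -/
def IsEffect {m : Type*} [Fintype m] [DecidableEq m] (S : Matrix m m ℂ) : Prop :=
  S.PosSemidef ∧ (1 - S).PosSemidef

/-- The rank-one operator `|ψ⟩⟨ψ|`. -/
noncomputable def outer {m : Type*} (ψ : m → ℂ) : Matrix m m ℂ :=
  Matrix.vecMulVec ψ (star ψ)

section aux
variable {m : Type*} [Fintype m] [DecidableEq m]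

omit [DecidableEq m] in
lemma mul_vecMulVec' (M : Matrix m m ℂ) (u v : m → ℂ) :
    M * vecMulVec u v = vecMulVec (M *ᵥ u) v := by
  ext i j
  simp only [Matrix.mul_apply, vecMulVec_apply, mulVec, dotProduct, Finset.sum_mul]
  exact Finset.sum_congr rfl fun k _ => by ring

omit [DecidableEq m] in
lemma vecMulVec_mul' (M : Matrix m m ℂ) (u v : m → ℂ) :
    vecMulVec u v * M = vecMulVec u (v ᵥ* M) := by
  ext i j
  simp only [Matrix.mul_apply, vecMulVec_apply, vecMul, dotProduct, Finset.mul_sum]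
  exact Finset.sum_congr rfl fun k _ => by ring

omit [DecidableEq m] in
lemma outer_mulVec' (u x : m → ℂ) : outer u *ᵥ x = (cinner u x) • u := by
  ext i
  simp only [outer, cinner, mulVec, vecMulVec_apply, dotProduct, Pi.smul_apply, smul_eq_mul,
    Finset.sum_mul]
  exact Finset.sum_congr rfl fun k _ => by ring

omit [DecidableEq m] in
lemma outer_mul_outer (u w : m → ℂ) :
    outer u * outer w = cinner u w • vecMulVec u (star w) := by
  ext i j
  simp only [outer, cinner, Matrix.mul_apply, vecMulVec_apply, Matrix.smul_apply, dotProduct,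
    smul_eq_mul, Finset.sum_mul]
  exact Finset.sum_congr rfl fun k _ => by ring

omit [Fintype m] [DecidableEq m] in
lemma outer_conjT (u : m → ℂ) : (outer u)ᴴ = outer u := by
  ext i j; simp [outer, vecMulVec_apply, mul_comm]

omit [DecidableEq m] in
lemma star_cinner_self (u : m → ℂ) : star (cinner u u) = cinner u u := by
  simp only [cinner, dotProduct, star_sum, star_mul', Pi.star_apply, star_star]
  exact Finset.sum_congr rfl fun k _ => by ring

omit [DecidableEq m] in
lemma cinner_self_eq_zero {u : m → ℂ} : cinner u u = 0 ↔ u = 0 := by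
  simpa [cinner] using (dotProduct_star_self_eq_zero (v := u))
end aux

/-- **Theorem 1, (separate orthogonality ⇒ perfect discrimination).**
If the `E` and `O` parts of two unit vectors `ψ, φ` are separately orthogonal, then there is
an orthogonal projection commuting with `P_E` that perfectly discriminates them. -/
theorem parts_orthogonal_implies_perfect_discrimination
    {n : ℕ} (P_E P_O : Matrix (Fin n) (Fin n) ℂ)
    (hPE : IsOrthoProj P_E) (hPO : IsOrthoProj P_O) (hsum : P_E + P_O = 1)
    (ψ φ : Fin n → ℂ) (hψ : cinner ψ ψ = 1) (hφ : cinner φ φ = 1)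
    (hE : cinner (P_E.mulVec ψ) (P_E.mulVec φ) = 0)
    (hO : cinner (P_O.mulVec ψ) (P_O.mulVec φ) = 0) :
    ∃ S : Matrix (Fin n) (Fin n) ℂ, IsOrthoProj S ∧ S * P_E = P_E * S ∧
      S.mulVec ψ = ψ ∧ S.mulVec φ = 0 ∧
      cinner ψ (S.mulVec ψ) - cinner φ (S.mulVec φ) = 1 := by
  classical
  obtain ⟨hPEh, hPEi⟩ := hPE
  obtain ⟨hPOh, hPOi⟩ := hPO
  set ψE := P_E *ᵥ ψ with hψEdef
  set ψO := P_O *ᵥ ψ with hψOdef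
  have hPO_eq : P_O = 1 - P_E := eq_sub_of_add_eq' hsum
  have hEO : P_E * P_O = 0 := by rw [hPO_eq]; simp [mul_sub, hPEi]
  have hOE : P_O * P_E = 0 := by rw [hPO_eq]; simp [sub_mul, hPEi]
  have hsumv : ψE + ψO = ψ := by
    rw [hψEdef, hψOdef, ← add_mulVec, hsum, one_mulVec]
  have hPEψE : P_E *ᵥ ψE = ψE := by rw [hψEdef, mulVec_mulVec, hPEi]
  have hPEψO : P_E *ᵥ ψO = 0 := by rw [hψOdef, mulVec_mulVec, hEO, zero_mulVec]
  have hPOψO : P_O *ᵥ ψO = ψO := by rw [hψOdef, mulVec_mulVec, hPOi]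
  have hPOψE : P_O *ᵥ ψE = 0 := by rw [hψEdef, mulVec_mulVec, hOE, zero_mulVec]
  -- star of image under Hermitian projection
  have hstarE : star ψE ᵥ* P_E = star ψE := by
    conv_lhs => rw [← hPEh, ← star_mulVec, hPEψE]
  have hstarO : star ψO ᵥ* P_O = star ψO := by
    conv_lhs => rw [← hPOh, ← star_mulVec, hPOψO]
  have hstarOE : star ψO ᵥ* P_E = 0 := by
    conv_lhs => rw [← hPEh, ← star_mulVec, hPEψO]
    simp
  have hstarEO : star ψE ᵥ* P_O = 0 := by
    conv_lhs => rw [← hPOh, ← star_mulVec, hPOψE]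
    simp
  -- orthogonality facts
  have hEO0 : cinner ψE ψO = 0 := by
    rw [cinner, hψOdef, dotProduct_mulVec, hstarEO, zero_dotProduct]
  have hOE0 : cinner ψO ψE = 0 := by
    rw [cinner, hψEdef, dotProduct_mulVec, hstarOE, zero_dotProduct]
  have hEφ : cinner ψE φ = 0 := by
    have : cinner ψE (P_E *ᵥ φ) = 0 := hE
    rwa [cinner, dotProduct_mulVec, hstarE, ← cinner] at this
  have hOφ : cinner ψO φ = 0 := by
    have : cinner ψO (P_O *ᵥ φ) = 0 := hO
    rwa [cinner, dotProduct_mulVec, hstarO, ← cinner] at this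
  set a := cinner ψE ψE with ha_def
  set b := cinner ψO ψO with hb_def
  have hEψ : cinner ψE ψ = a := by
    rw [← hsumv, cinner, dotProduct_add, ← cinner, ← cinner, hEO0, add_zero, ha_def]
  have hOψ : cinner ψO ψ = b := by
    rw [← hsumv, cinner, dotProduct_add, ← cinner, ← cinner, hOE0, zero_add, hb_def]
  have hstara : star a = a := star_cinner_self ψE
  have hstarb : star b = b := star_cinner_self ψO
  -- the projection
  refine ⟨a⁻¹ • outer ψE + b⁻¹ • outer ψO, ⟨?_, ?_⟩, ?_, ?_, ?_, ?_⟩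
  · -- Hermitian
    unfold Matrix.IsHermitian
    rw [conjTranspose_add, conjTranspose_smul, conjTranspose_smul, outer_conjT, outer_conjT,
      star_inv₀, star_inv₀, hstara, hstarb]
  · -- idempotent
    have key : ∀ u : Fin n → ℂ,
        ((cinner u u)⁻¹ • outer u) * ((cinner u u)⁻¹ • outer u) = (cinner u u)⁻¹ • outer u := by
      intro u
      by_cases h : u = 0
      · subst h
        have h0 : outer (0 : Fin n → ℂ) = 0 := by ext i j; simp [outer, vecMulVec_apply]
        rw [h0]; simp
      · have hc : cinner u u ≠ 0 := fun h0 => h (cinner_self_eq_zero.mp h0)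
        rw [smul_mul_smul_comm, outer_mul_outer, ← outer, smul_smul]
        congr 1
        field_simp
    have cross1 : outer ψE * outer ψO = 0 := by
      rw [outer_mul_outer, hEO0, zero_smul]
    have cross2 : outer ψO * outer ψE = 0 := by
      rw [outer_mul_outer, hOE0, zero_smul]
    rw [add_mul, mul_add, mul_add, key ψE, key ψO,
      smul_mul_smul_comm, smul_mul_smul_comm, cross1, cross2]
    simp [ha_def, hb_def]
  · -- commutes with P_E
    rw [add_mul, mul_add, smul_mul_assoc, smul_mul_assoc, mul_smul_comm, mul_smul_comm,
      outer, outer, vecMulVec_mul', vecMulVec_mul', mul_vecMulVec', mul_vecMulVec',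
      hstarE, hstarOE, hPEψE, hPEψO]
    simp [vecMulVec]
  · -- S ψ = ψ
    rw [add_mulVec, smul_mulVec, smul_mulVec, outer_mulVec', outer_mulVec',
      hEψ, hOψ]
    have h1 : ∀ u : Fin n → ℂ, (cinner u u)⁻¹ • (cinner u u) • u = u := by
      intro u
      by_cases h : u = 0
      · simp [h]
      · rw [smul_smul, inv_mul_cancel₀ (fun h0 => h (cinner_self_eq_zero.mp h0)), one_smul]
    rw [h1, h1, hsumv]
  · -- S φ = 0
    rw [add_mulVec, smul_mulVec, smul_mulVec, outer_mulVec', outer_mulVec',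
      hEφ, hOφ]
    simp
  · rw [add_mulVec, smul_mulVec, smul_mulVec, outer_mulVec', outer_mulVec',
      hEψ, hOψ]
    have h1 : ∀ u : Fin n → ℂ, (cinner u u)⁻¹ • (cinner u u) • u = u := by
      intro u
      by_cases h : u = 0
      · simp [h]
      · rw [smul_smul, inv_mul_cancel₀ (fun h0 => h (cinner_self_eq_zero.mp h0)), one_smul]
    rw [h1, h1, hsumv]
    rw [add_mulVec, smul_mulVec, smul_mulVec, outer_mulVec', outer_mulVec',
      hEφ, hOφ]
    simp only [zero_smul, smul_zero, add_zero, cinner, dotProduct_zero, sub_zero]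
    exact hψ
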